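/- Fix a real constant D, let Φ : ℝ² → ℝ be a continuously differentiable function, and let f(z, s) = ((1 + z) + e^{−s}(1 − z))/2, Z(z, s) = (((1 + z) − e^{−s}(1 − z))/2)/f(z, s). For (u, v) ∈ ℝ² define (V(s)Φ)(u, v) = f(u, s)^{−D} · f(−v, −s)^{−D} · Φ(Z(u, s), Z(v, s)) for s near 0. Then s ↦ (V(s)Φ)(u, v) is differentiable at s = 0 with derivative (K₀Φ)(u, v) = −(D/2)(u + v)Φ(u, v) + (1/2)(1 − u²)∂_uΦ(u, v) + (1/2)(1 − v²)∂_vΦ(u, v). -/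

import Mathlib

/-- The derivative at `s = 0` of the massless double-cone modular flow
`(V(s)Φ)(u,v) = f(u,s)^{-D} f(-v,-s)^{-D} Φ(Z(u,s), Z(v,s))` acting on a `C¹` function `Φ`
in light-cone coordinates is the generator
`(K₀Φ)(u,v) = -(D/2)(u+v)Φ(u,v) + ½(1-u²)∂_uΦ(u,v) + ½(1-v²)∂_vΦ(u,v)`. -/
theorem modular_flow_generator (D : ℝ) (Φ : ℝ × ℝ → ℝ) (hΦ : ContDiff ℝ 1 Φ) (u v : ℝ) :
    let f : ℝ → ℝ → ℝ := fun z s => ((1 + z) + Real.exp (-s) * (1 - z)) / 2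
    let Z : ℝ → ℝ → ℝ := fun z s => (((1 + z) - Real.exp (-s) * (1 - z)) / 2) / f z s
    HasDerivAt (fun s => f u s ^ (-D) * f (-v) (-s) ^ (-D) * Φ (Z u s, Z v s))
      (-(D / 2) * (u + v) * Φ (u, v)
        + (1 / 2) * (1 - u ^ 2) * fderiv ℝ Φ (u, v) (1, 0)
        + (1 / 2) * (1 - v ^ 2) * fderiv ℝ Φ (u, v) (0, 1)) 0 := by
  intro f Z
  have hΦd : Differentiable ℝ Φ := hΦ.differentiable one_ne_zero
  set L := fderiv ℝ Φ (u, v) with hL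
  -- derivative of f u · at 0
  have h1 : HasDerivAt (fun s => f u s) (-(1 - u) / 2) 0 := by
    have h := (((hasDerivAt_neg (0 : ℝ)).exp.mul_const (1 - u)).const_add (1 + u)).div_const 2
    refine h.congr_deriv ?_
    simp [Real.exp_zero]
  have h1v : f u 0 = 1 := by simp [f, Real.exp_zero]
  -- derivative of f (-v) (-·) at 0
  have h2 : HasDerivAt (fun s => f (-v) (-s)) ((1 + v) / 2) 0 := by
    have h := ((((hasDerivAt_neg (0 : ℝ)).neg).exp.mul_const (1 - -v)).const_add (1 + -v)).div_const 2
    refine h.congr_deriv ?_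
    simp [Real.exp_zero]
  have h2v : f (-v) (-0) = 1 := by simp [f, Real.exp_zero]; ring
  -- rpow factors
  have hp : HasDerivAt (fun s => f u s ^ (-D)) (D * (1 - u) / 2) 0 := by
    have h := h1.rpow_const (p := -D) (Or.inl (by rw [h1v]; norm_num))
    convert h using 1
    rw [h1v]; simp; ring
  have hq : HasDerivAt (fun s => f (-v) (-s) ^ (-D)) (-(D * (1 + v) / 2)) 0 := by
    have h := h2.rpow_const (p := -D) (Or.inl (by rw [h2v]; norm_num))
    convert h using 1
    rw [show f (-v) (-0) = 1 from h2v]; simp; ring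
  -- numerators
  have hNu : HasDerivAt (fun s => ((1 + u) - Real.exp (-s) * (1 - u)) / 2) ((1 - u) / 2) 0 := by
    have h := (((hasDerivAt_neg (0 : ℝ)).exp.mul_const (1 - u)).const_sub (1 + u)).div_const 2
    refine h.congr_deriv ?_
    simp [Real.exp_zero]
  have hNv : HasDerivAt (fun s => ((1 + v) - Real.exp (-s) * (1 - v)) / 2) ((1 - v) / 2) 0 := by
    have h := (((hasDerivAt_neg (0 : ℝ)).exp.mul_const (1 - v)).const_sub (1 + v)).div_const 2
    refine h.congr_deriv ?_
    simp [Real.exp_zero]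
  have h1w : HasDerivAt (fun s => f v s) (-(1 - v) / 2) 0 := by
    have h := (((hasDerivAt_neg (0 : ℝ)).exp.mul_const (1 - v)).const_add (1 + v)).div_const 2
    refine h.congr_deriv ?_
    simp [Real.exp_zero]
  have h1wv : f v 0 = 1 := by simp [f, Real.exp_zero]
  -- Z derivatives
  have hNu0 : ((1 + u) - Real.exp (-(0:ℝ)) * (1 - u)) / 2 = u := by
    simp [Real.exp_zero]
  have hNv0 : ((1 + v) - Real.exp (-(0:ℝ)) * (1 - v)) / 2 = v := by
    simp [Real.exp_zero]
  have hZu : HasDerivAt (fun s => Z u s) ((1 - u ^ 2) / 2) 0 := by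
    have h := hNu.div h1 (by rw [h1v]; norm_num)
    refine h.congr_deriv ?_
    rw [h1v, hNu0]; ring
  have hZv : HasDerivAt (fun s => Z v s) ((1 - v ^ 2) / 2) 0 := by
    have h := hNv.div h1w (by rw [h1wv]; norm_num)
    refine h.congr_deriv ?_
    rw [h1wv, hNv0]; ring
  have hZu0 : Z u 0 = u := by simp only [Z, hNu0, h1v, div_one]
  have hZv0 : Z v 0 = v := by simp only [Z, hNv0, h1wv, div_one]
  -- chain rule through Φ
  have hcurve : HasDerivAt (fun s => (Z u s, Z v s)) ((1 - u ^ 2) / 2, (1 - v ^ 2) / 2) 0 :=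
    hZu.prodMk hZv
  have hcomp : HasDerivAt (fun s => Φ (Z u s, Z v s)) (L ((1 - u ^ 2) / 2, (1 - v ^ 2) / 2)) 0 := by
    have hF : HasFDerivAt Φ L (Z u 0, Z v 0) := by
      rw [hZu0, hZv0]; exact (hΦd (u, v)).hasFDerivAt
    exact hF.comp_hasDerivAt 0 hcurve
  have hLlin : L ((1 - u ^ 2) / 2, (1 - v ^ 2) / 2)
      = (1 - u ^ 2) / 2 * L (1, 0) + (1 - v ^ 2) / 2 * L (0, 1) := by
    have hsum : ((1 - u ^ 2) / 2, (1 - v ^ 2) / 2)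
        = ((1 - u ^ 2) / 2) • ((1:ℝ), (0:ℝ)) + ((1 - v ^ 2) / 2) • ((0:ℝ), (1:ℝ)) := by
      simp [Prod.ext_iff]
    rw [hsum, map_add, map_smul, map_smul, smul_eq_mul, smul_eq_mul]
  have hmain := (hp.mul hq).mul hcomp
  have hval : (fun s => f u s ^ (-D) * f (-v) (-s) ^ (-D) * Φ (Z u s, Z v s)) =
      (fun s => f u s ^ (-D) * f (-v) (-s) ^ (-D) * Φ (Z u s, Z v s)) := rfl
  refine hmain.congr_deriv ?_
  rw [hLlin, hZu0, hZv0, h1v, show f (-v) (-0) = 1 from h2v]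
  simp [Real.one_rpow, h1v, show f (-v) 0 = 1 by simpa using h2v]
  ring
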